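/- Let m, n, d, e be positive integers with d² ∣ m and e² ∣ m·n. If either d does not divide e, or both m does not divide d·e and e does not divide d·n, then c_{m,n}(d,e) = 0, i.e. the group (ZMod e) × (ZMod (m·n/e)) has no subgroup isomorphic to (ZMod d) × (ZMod (m/d)). -/

import Mathlib

/-- `c_{m,n}(d,e)`: the number of subgroups of `ZMod e × ZMod (m·n/e)` that are
isomorphic (as groups, written additively) to `ZMod d × ZMod (m/d)`. -/
noncomputable def subgroupCount (m n d e : ℕ) : ℕ :=
  Nat.card {H : AddSubgroup (ZMod e × ZMod (m * n / e)) //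
    Nonempty (H ≃+ ZMod d × ZMod (m / d))}

lemma torsion_card_le (k N : ℕ) (hk : 0 < k) [NeZero N] :
    Nat.card {x : ZMod N // k • x = 0} ≤ Nat.gcd k N := by
  classical
  have hsub : ∀ x : ZMod N, k • x = 0 → Nat.gcd k N • x = 0 := by
    intro x hx
    have hN : (N : ℤ) • x = 0 := by
      rw [natCast_zsmul]
      simp [nsmul_eq_mul, ZMod.natCast_self]
    have hk' : (k : ℤ) • x = 0 := by rw [natCast_zsmul]; exact hx
    calc Nat.gcd k N • x = ((Nat.gcd k N : ℤ)) • x := (natCast_zsmul ..).symm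
      _ = ((k : ℤ) * Nat.gcdA k N + (N : ℤ) * Nat.gcdB k N) • x := by
          rw [← Nat.gcd_eq_gcd_ab]
      _ = 0 := by
          rw [add_zsmul, mul_comm (k : ℤ), mul_comm (N : ℤ), mul_zsmul, mul_zsmul,
            hk', hN, smul_zero, smul_zero, add_zero]
  have hg : 0 < Nat.gcd k N := Nat.gcd_pos_of_pos_left _ hk
  calc Nat.card {x : ZMod N // k • x = 0}
      = Fintype.card {x : ZMod N // k • x = 0} := Nat.card_eq_fintype_card
    _ ≤ Fintype.card {x : ZMod N // Nat.gcd k N • x = 0} :=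
        Fintype.card_subtype_mono _ _ hsub
    _ ≤ Nat.gcd k N := by
        rw [Fintype.card_subtype]
        exact IsAddCyclic.card_nsmul_eq_zero_le hg

theorem subgroupCount_eq_zero (m n d e : ℕ) (hm : 0 < m) (hn : 0 < n)
    (hd : 0 < d) (he : 0 < e) (hdm : d ^ 2 ∣ m) (hem : e ^ 2 ∣ m * n)
    (h : ¬ d ∣ e ∨ (¬ m ∣ d * e ∧ ¬ e ∣ d * n)) :
    subgroupCount m n d e = 0 := by
  have hdm' : d ∣ m := dvd_trans (dvd_pow_self d two_ne_zero) hdm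
  have hem' : e ∣ m * n := dvd_trans (dvd_pow_self e two_ne_zero) hem
  have hdm2 : d ∣ m / d := by
    rw [Nat.dvd_div_iff_mul_dvd hdm']; rw [← pow_two]; exact hdm
  have hem2 : e ∣ m * n / e := by
    rw [Nat.dvd_div_iff_mul_dvd hem']; rw [← pow_two]; exact hem
  have hmd : 0 < m / d := Nat.div_pos (Nat.le_of_dvd hm hdm') hd
  have hmne : 0 < m * n / e := Nat.div_pos (Nat.le_of_dvd (by positivity) hem') he
  haveI : NeZero e := ⟨he.ne'⟩
  haveI : NeZero d := ⟨hd.ne'⟩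
  haveI : NeZero (m * n / e) := ⟨hmne.ne'⟩
  haveI : NeZero (m / d) := ⟨hmd.ne'⟩
  have key : IsEmpty {H : AddSubgroup (ZMod e × ZMod (m * n / e)) //
      Nonempty (H ≃+ ZMod d × ZMod (m / d))} := by
    constructor
    rintro ⟨H, ⟨φ⟩⟩
    rcases h with hde | ⟨_, hedn⟩
    · -- d ∤ e : torsion counting
      -- the element c of order d in ZMod (m/d)
      set c : ZMod (m / d) := ((m / d / d : ℕ) : ZMod (m / d)) with hc
      have hoc : addOrderOf c = d := by
        rw [hc, ZMod.addOrderOf_coe _ hmd.ne',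
          Nat.gcd_eq_right (Nat.div_dvd_of_dvd hdm2), Nat.div_div_self hdm2 hmd.ne']
      -- injection from ZMod d × zmultiples c into the d-torsion of the big group
      have hinj : Function.Injective (fun p : ZMod d × (AddSubgroup.zmultiples c) =>
          ((φ.symm (p.1, (p.2 : ZMod (m / d)))) : ZMod e × ZMod (m * n / e))) := by
        intro a b hab
        have := φ.symm.injective (Subtype.ext hab)
        have h1 := congrArg Prod.fst this
        have h2 := congrArg Prod.snd this
        exact Prod.ext h1 (Subtype.ext h2)
      have htor : ∀ p : ZMod d × (AddSubgroup.zmultiples c),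
          d • ((φ.symm (p.1, (p.2 : ZMod (m / d)))) : ZMod e × ZMod (m * n / e)) = 0 := by
        rintro ⟨a, ⟨b, k, rfl⟩⟩
        have h1 : d • ((a, (k • c : ZMod (m / d))) : ZMod d × ZMod (m / d)) = 0 := by
          have hca : d • a = 0 := by
            simp [nsmul_eq_mul, ZMod.natCast_self]
          have hdc : d • c = 0 := by
            have h0 := addOrderOf_nsmul_eq_zero c
            rwa [hoc] at h0
          have hcb : d • (k • c) = 0 := by
            rw [smul_comm, hdc, smul_zero]
          rw [Prod.smul_mk, hca, hcb]; rfl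
        calc d • ((φ.symm (a, (k • c : ZMod (m / d)))) : ZMod e × ZMod (m * n / e))
            = ((d • φ.symm (a, (k • c : ZMod (m / d))) : H) : ZMod e × ZMod (m * n / e)) := rfl
          _ = ((φ.symm (d • ((a, (k • c : ZMod (m / d))) : ZMod d × ZMod (m / d))) : H) :
                ZMod e × ZMod (m * n / e)) := by rw [map_nsmul]
          _ = 0 := by rw [h1, map_zero]; rfl
      -- hence d * d ≤ card of the d-torsion of the big group
      have hle1 : d * d ≤ Nat.card {x : ZMod e × ZMod (m * n / e) // d • x = 0} := by
        have := Nat.card_le_card_of_injective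
          (fun p : ZMod d × (AddSubgroup.zmultiples c) =>
            (⟨((φ.symm (p.1, (p.2 : ZMod (m / d)))) : ZMod e × ZMod (m * n / e)), htor p⟩ :
              {x : ZMod e × ZMod (m * n / e) // d • x = 0}))
          (by
            intro a b hab
            apply hinj
            have h0 := congrArg Subtype.val hab
            exact h0)
        rwa [Nat.card_prod, Nat.card_zmod, Nat.card_zmultiples, hoc] at this
      -- upper bound for the torsion
      have hle2 : Nat.card {x : ZMod e × ZMod (m * n / e) // d • x = 0} ≤
          Nat.gcd d e * Nat.gcd d (m * n / e) := by
        have hsplit := Nat.card_le_card_of_injective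
          (fun x : {x : ZMod e × ZMod (m * n / e) // d • x = 0} =>
            ((⟨x.1.1, congrArg Prod.fst x.2⟩, ⟨x.1.2, congrArg Prod.snd x.2⟩) :
              {a : ZMod e // d • a = 0} × {b : ZMod (m * n / e) // d • b = 0}))
          (by
            intro a b hab
            apply Subtype.ext
            have h1 := congrArg (fun q => (q.1 : ZMod e)) hab
            have h2 := congrArg (fun q => (q.2 : ZMod (m * n / e))) hab
            exact Prod.ext h1 h2)
        refine hsplit.trans ?_
        rw [Nat.card_prod]
        exact Nat.mul_le_mul (torsion_card_le d e hd) (torsion_card_le d (m * n / e) hd)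
      have hlt : Nat.gcd d e * Nat.gcd d (m * n / e) < d * d := by
        have h1 : Nat.gcd d e < d :=
          lt_of_le_of_ne (Nat.le_of_dvd hd (Nat.gcd_dvd_left d e))
            (fun hh => hde (hh ▸ Nat.gcd_dvd_right d e))
        have h2 : Nat.gcd d (m * n / e) ≤ d := Nat.le_of_dvd hd (Nat.gcd_dvd_left _ _)
        calc Nat.gcd d e * Nat.gcd d (m * n / e) ≤ Nat.gcd d e * d :=
              Nat.mul_le_mul_left _ h2
          _ < d * d := Nat.mul_lt_mul_of_lt_of_le h1 le_rfl hd
      omega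
    · -- second case: derive e ∣ d * n
      apply hedn
      -- the element (0, 1) has order m/d; its image has order dividing m*n/e
      have hkill : (m * n / e) • ((φ.symm (0, 1)) : ZMod e × ZMod (m * n / e)) = 0 := by
        apply Prod.ext
        · show (m * n / e) • ((φ.symm (0, 1)) : ZMod e × ZMod (m * n / e)).1 = (0 : ZMod e)
          rw [nsmul_eq_mul, (ZMod.natCast_eq_zero_iff _ _).mpr hem2, zero_mul]
        · show (m * n / e) • ((φ.symm (0, 1)) : ZMod e × ZMod (m * n / e)).2 = 0
          rw [nsmul_eq_mul, ZMod.natCast_self, zero_mul]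
      have hH : (m * n / e) • (φ.symm (0, 1)) = (0 : H) := by
        apply Subtype.ext
        simpa using hkill
      have := congrArg φ hH
      rw [map_nsmul, map_zero, AddEquiv.apply_symm_apply] at this
      have h2 : (m * n / e) • ((0, 1) : ZMod d × ZMod (m / d)).2 = 0 :=
        congrArg Prod.snd this
      have hdvd : (m / d) ∣ (m * n / e) := by
        have := addOrderOf_dvd_of_nsmul_eq_zero h2
        rwa [ZMod.addOrderOf_one] at this
      -- turn m/d ∣ m*n/e into e ∣ d*n
      have step1 : e * (m / d) ∣ m * n := by
        have := mul_dvd_mul_left e hdvd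
        rwa [Nat.mul_div_cancel' hem'] at this
      have step2 : e * m ∣ (d * n) * m := by
        have := mul_dvd_mul_left d step1
        rw [← mul_assoc, mul_comm d e, mul_assoc, Nat.mul_div_cancel' hdm'] at this
        calc e * m ∣ d * (m * n) := this
          _ = (d * n) * m := by ring
      exact (Nat.mul_dvd_mul_iff_right hm).mp step2
  unfold subgroupCount
  exact Nat.card_of_isEmpty
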